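/- Let w : ℝ → ℂ and G : (0,∞) → ℝ satisfy: for every t ∈ ℝ there is a Lebesgue nullset E_t ⊆ (0,∞) with e^{i t G(u)} = w(t) for all u ∉ E_t. Then there exists κ ∈ ℝ such that w(t) = e^{iκt} for all t ∈ ℝ, and G(u) = κ for Lebesgue-almost all u ∈ (0,∞). -/

import Mathlib

open MeasureTheory Set Complex

lemma exp_I_eq_aux (a b : ℝ)
    (h : Complex.exp (Complex.I * a) = Complex.exp (Complex.I * b)) :
    ∃ n : ℤ, a = b + n * (2 * Real.pi) := by
  rw [Complex.exp_eq_exp_iff_exists_int] at h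
  obtain ⟨n, hn⟩ := h
  refine ⟨n, ?_⟩
  have h2 : (Complex.I : ℂ) * a = Complex.I * (b + n * (2 * Real.pi)) := by
    rw [hn]; push_cast; ring
  have := mul_left_cancel₀ Complex.I_ne_zero h2
  have : ((a : ℂ)) = ((b + n * (2 * Real.pi) : ℝ) : ℂ) := by
    rw [this]; push_cast; ring
  exact_mod_cast this

lemma key (a b : ℝ)
    (h1 : Complex.exp (Complex.I * a) = Complex.exp (Complex.I * b))
    (h2 : Complex.exp (Complex.I * (Real.sqrt 2 * a)) = Complex.exp (Complex.I * (Real.sqrt 2 * b))) :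
    a = b := by
  obtain ⟨n, hn⟩ := exp_I_eq_aux a b h1
  have h2' : Complex.exp (Complex.I * ((Real.sqrt 2 * a : ℝ) : ℂ)) = Complex.exp (Complex.I * ((Real.sqrt 2 * b : ℝ) : ℂ)) := by
    push_cast; exact h2
  obtain ⟨m, hm⟩ := exp_I_eq_aux (Real.sqrt 2 * a) (Real.sqrt 2 * b) h2'
  have hpi : (0:ℝ) < Real.pi := Real.pi_pos
  by_cases hn0 : n = 0
  · simp [hn0] at hn; linarith [hn]
  · exfalso
    have hsm : Real.sqrt 2 * (n * (2 * Real.pi)) = m * (2 * Real.pi) := by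
      have : Real.sqrt 2 * a = Real.sqrt 2 * b + Real.sqrt 2 * (n * (2 * Real.pi)) := by
        rw [hn]; ring
      rw [this] at hm
      linarith [hm]
    have h2n : Real.sqrt 2 * n = m := by
      have h2pi : (2 * Real.pi) ≠ 0 := by positivity
      apply mul_right_cancel₀ h2pi
      rw [← hsm]; ring
    have : Irrational (Real.sqrt 2) := irrational_sqrt_two
    apply this
    refine ⟨(m : ℚ) / (n : ℚ), ?_⟩
    have hnR : (n : ℝ) ≠ 0 := Int.cast_ne_zero.mpr hn0
    push_cast
    field_simp
    linarith [h2n]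

theorem stmt_13 (G : ℝ → ℝ) (hG : Measurable G) (w : ℝ → ℂ)
    (h : ∀ t : ℝ, ∃ E : Set ℝ, volume E = 0 ∧
      ∀ u : ℝ, 0 < u → u ∉ E → Complex.exp (Complex.I * t * G u) = w t) :
    ∃ κ : ℝ, (∀ t : ℝ, w t = Complex.exp (Complex.I * κ * t)) ∧
      ∀ᵐ u : ℝ ∂volume, u ∈ Ioi (0 : ℝ) → G u = κ := by
  obtain ⟨E1, hE1, h1⟩ := h 1
  obtain ⟨E2, hE2, h2⟩ := h (Real.sqrt 2)
  -- find a point u₀ ∈ Ioi 0 outside E1 ∪ E2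
  have hnull : volume (E1 ∪ E2) = 0 := by
    rw [measure_union_null_iff]; exact ⟨hE1, hE2⟩
  have hpick : ∀ N : Set ℝ, volume N = 0 → ∃ u : ℝ, 0 < u ∧ u ∉ N := by
    intro N hN
    by_contra hc
    push_neg at hc
    have hsub : Ioi (0:ℝ) ⊆ N := fun u hu => hc u hu
    have := measure_mono (μ := volume) hsub
    rw [hN, Real.volume_Ioi] at this
    simp at this
  obtain ⟨u₀, hu₀, hu₀'⟩ := hpick _ hnull
  set κ := G u₀ with hκ
  have hw1 : w 1 = Complex.exp (Complex.I * κ) := by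
    rw [← h1 u₀ hu₀ (fun hx => hu₀' (Or.inl hx))]; push_cast; ring_nf; rw [hκ]
  have hw2 : w (Real.sqrt 2) = Complex.exp (Complex.I * (Real.sqrt 2 * κ)) := by
    rw [← h2 u₀ hu₀ (fun hx => hu₀' (Or.inr hx))]; ring_nf; rw [hκ]
  -- a.e. statement
  have hae : ∀ᵐ u : ℝ ∂volume, u ∈ Ioi (0 : ℝ) → G u = κ := by
    have hEae : ∀ᵐ u : ℝ ∂volume, u ∉ E1 ∪ E2 :=
      (measure_eq_zero_iff_ae_notMem).mp hnull
    filter_upwards [hEae] with u hu hu'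
    apply key
    · have e1 := h1 u hu' (fun hx => hu (Or.inl hx))
      rw [hw1] at e1
      simpa using e1
    · have e2 := h2 u hu' (fun hx => hu (Or.inr hx))
      rw [hw2] at e2
      have : Complex.I * Real.sqrt 2 * (G u) = Complex.I * (Real.sqrt 2 * G u) := by ring
      rw [this] at e2
      exact e2
  refine ⟨κ, ?_, hae⟩
  intro t
  obtain ⟨Et, hEt, ht⟩ := h t
  have hbad : volume {u : ℝ | ¬ (u ∈ Ioi (0:ℝ) → G u = κ)} = 0 := ae_iff.mp hae
  have hnull2 : volume (Et ∪ {u : ℝ | ¬ (u ∈ Ioi (0:ℝ) → G u = κ)}) = 0 := by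
    rw [measure_union_null_iff]; exact ⟨hEt, hbad⟩
  obtain ⟨u, hu, hu'⟩ := hpick _ hnull2
  have hGu : G u = κ := by
    have h' : u ∈ Ioi 0 → G u = κ := not_not.mp (fun hx => hu' (Or.inr hx))
    exact h' hu
  have := ht u hu (fun hx => hu' (Or.inl hx))
  rw [hGu] at this
  rw [← this]
  push_cast
  ring_nf
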